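/- Let λ = √2 + 1 and define P₀, Q₀ : ℝ → ℂ by P₀(ξ) = 2πiξ − λ(e^{πiξ/√2} − 1) − λ^{-1}(1 − e^{−πiξ/√2}) and Q₀(ξ) = −λ(πi/√2)(e^{πiξ/√2} − 1) + λ^{-1}(πi/√2)(1 − e^{−πiξ/√2}). Then: (i) there exist δ > 0 and C > 0 such that |P₀(ξ) − π²ξ²/2| ≤ C|ξ|³ and |Q₀(ξ) − π²ξ| ≤ C|ξ|² for all |ξ| < δ; (ii) P₀(ξ) ≠ 0 for every real ξ ≠ 0. -/

import Mathlib

noncomputable section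

/-- The Bäcklund parameter λ = √2 + 1. -/
def lam : ℂ := ((Real.sqrt 2 + 1 : ℝ) : ℂ)

/-- P₀(ξ) = 2πiξ − λ(e^{πiξ/√2} − 1) − λ⁻¹(1 − e^{−πiξ/√2}). -/
def P0 (ξ : ℝ) : ℂ :=
  2 * (Real.pi : ℂ) * Complex.I * (ξ : ℂ)
  - lam * (Complex.exp ((Real.pi : ℂ) * Complex.I * (ξ : ℂ) / (Real.sqrt 2 : ℂ)) - 1)
  - lam⁻¹ * (1 - Complex.exp (-((Real.pi : ℂ) * Complex.I * (ξ : ℂ) / (Real.sqrt 2 : ℂ))))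

/-- Q₀(ξ) = −λ(πi/√2)(e^{πiξ/√2} − 1) + λ⁻¹(πi/√2)(1 − e^{−πiξ/√2}). -/
def Q0 (ξ : ℝ) : ℂ :=
  -lam * ((Real.pi : ℂ) * Complex.I / (Real.sqrt 2 : ℂ))
     * (Complex.exp ((Real.pi : ℂ) * Complex.I * (ξ : ℂ) / (Real.sqrt 2 : ℂ)) - 1)
  + lam⁻¹ * ((Real.pi : ℂ) * Complex.I / (Real.sqrt 2 : ℂ))
     * (1 - Complex.exp (-((Real.pi : ℂ) * Complex.I * (ξ : ℂ) / (Real.sqrt 2 : ℂ))))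

/-- Second-order Taylor bound for the complex exponential. -/
lemma exp3 (w : ℂ) (hw : ‖w‖ ≤ 1) :
    ‖Complex.exp w - (1 + w + w^2/2)‖ ≤ ‖w‖^3 := by
  have h := Complex.exp_bound (x := w) (by simpa using hw)
    (n := 3) (by norm_num)
  simp only [Finset.sum_range_succ, Finset.sum_range_zero, Nat.factorial] at h
  norm_num at h
  nlinarith [pow_nonneg (norm_nonneg w) 3, h]

lemma sqrt2_sq_c : ((Real.sqrt 2 : ℝ) : ℂ) * ((Real.sqrt 2 : ℝ) : ℂ) = 2 := by
  have : Real.sqrt 2 * Real.sqrt 2 = 2 := Real.mul_self_sqrt (by norm_num)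
  exact_mod_cast this

lemma lam_inv : lam⁻¹ = ((Real.sqrt 2 - 1 : ℝ) : ℂ) := by
  apply inv_eq_of_mul_eq_one_right
  unfold lam
  push_cast
  linear_combination sqrt2_sq_c

lemma key_arg (ξ : ℝ) :
    (Real.pi : ℂ) * Complex.I * (ξ : ℂ) / (Real.sqrt 2 : ℂ)
      = ((Real.pi * ξ / Real.sqrt 2 : ℝ) : ℂ) * Complex.I := by
  push_cast; ring

lemma hpxc (ξ : ℝ) : (Real.pi : ℂ) * (ξ:ℂ)
    = ((Real.sqrt 2 : ℝ):ℂ) * ((Real.pi * ξ / Real.sqrt 2 : ℝ):ℂ) := by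
  have hs : Real.sqrt 2 ≠ 0 := by positivity
  have h : Real.pi * ξ = Real.sqrt 2 * (Real.pi * ξ / Real.sqrt 2) := by field_simp
  exact_mod_cast h

lemma hP_id (ξ : ℝ) :
    P0 ξ - (Real.pi : ℂ)^2 * (ξ : ℂ)^2 / 2
      = -lam * (Complex.exp (((Real.pi * ξ / Real.sqrt 2 : ℝ) : ℂ) * Complex.I)
          - (1 + ((Real.pi * ξ / Real.sqrt 2 : ℝ) : ℂ) * Complex.I
             + (((Real.pi * ξ / Real.sqrt 2 : ℝ) : ℂ) * Complex.I)^2 / 2))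
      + lam⁻¹ * (Complex.exp (-(((Real.pi * ξ / Real.sqrt 2 : ℝ) : ℂ) * Complex.I))
          - (1 + (-(((Real.pi * ξ / Real.sqrt 2 : ℝ) : ℂ) * Complex.I))
             + (-(((Real.pi * ξ / Real.sqrt 2 : ℝ) : ℂ) * Complex.I))^2 / 2)) := by
  have htc : (((Real.pi * ξ / Real.sqrt 2 : ℝ) : ℂ))^2 = (Real.pi : ℂ)^2 * (ξ:ℂ)^2 / 2 := by
    have h : (Real.pi * ξ / Real.sqrt 2 : ℝ)^2 = Real.pi^2 * ξ^2 / 2 := by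
      rw [div_pow, mul_pow, Real.sq_sqrt (by norm_num : (0:ℝ) ≤ 2)]
    exact_mod_cast h
  unfold P0
  rw [key_arg, lam_inv]
  unfold lam
  set t : ℝ := Real.pi * ξ / Real.sqrt 2 with htdef
  push_cast
  linear_combination (-(t:ℂ)^2) * Complex.I_sq + htc + 2 * Complex.I * (hpxc ξ)

lemma c_eq : (Real.pi:ℂ) * Complex.I / (Real.sqrt 2 : ℂ)
    = (Real.pi:ℂ) * Complex.I * ((Real.sqrt 2:ℝ):ℂ) / 2 := by
  have hsC : ((Real.sqrt 2:ℝ):ℂ) ≠ 0 := by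
    have : Real.sqrt 2 ≠ 0 := by positivity
    exact_mod_cast this
  rw [div_eq_div_iff hsC two_ne_zero]
  linear_combination (-(Real.pi:ℂ) * Complex.I) * sqrt2_sq_c

lemma hQ_id (ξ : ℝ) :
    Q0 ξ - (Real.pi : ℂ)^2 * (ξ : ℂ)
      = ((Real.pi:ℂ) * Complex.I * ((Real.sqrt 2:ℝ):ℂ) / 2) *
        ( -((Real.sqrt 2:ℝ):ℂ) * (((Real.pi * ξ / Real.sqrt 2 : ℝ) : ℂ) * Complex.I)^2
          - lam * (Complex.exp (((Real.pi * ξ / Real.sqrt 2 : ℝ) : ℂ) * Complex.I)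
              - (1 + ((Real.pi * ξ / Real.sqrt 2 : ℝ) : ℂ) * Complex.I
                 + (((Real.pi * ξ / Real.sqrt 2 : ℝ) : ℂ) * Complex.I)^2 / 2))
          - lam⁻¹ * (Complex.exp (-(((Real.pi * ξ / Real.sqrt 2 : ℝ) : ℂ) * Complex.I))
              - (1 + (-(((Real.pi * ξ / Real.sqrt 2 : ℝ) : ℂ) * Complex.I))
                 + (-(((Real.pi * ξ / Real.sqrt 2 : ℝ) : ℂ) * Complex.I))^2 / 2)) ) := by
  unfold Q0
  rw [key_arg, c_eq, lam_inv]
  unfold lam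
  set t : ℝ := Real.pi * ξ / Real.sqrt 2 with htdef
  push_cast
  linear_combination (-(Real.pi:ℂ) * ((Real.sqrt 2:ℝ):ℂ) * (t:ℂ)) * Complex.I_sq
    + (-(Real.pi:ℂ)) * (hpxc ξ)

lemma P0_im (ξ : ℝ) :
    (P0 ξ).im = 2 * Real.pi * ξ - 2 * Real.sqrt 2 * Real.sin (Real.pi * ξ / Real.sqrt 2) := by
  unfold P0
  rw [key_arg, lam_inv]
  unfold lam
  have h3 : ∀ x:ℝ, -((x:ℂ) * Complex.I) = ((-x : ℝ):ℂ) * Complex.I := fun x => by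
    push_cast; ring
  simp only [h3, Complex.sub_im, Complex.add_im, Complex.mul_im, Complex.mul_re,
    Complex.one_im, Complex.one_re, Complex.exp_ofReal_mul_I_im, Complex.exp_ofReal_mul_I_re,
    Complex.ofReal_im, Complex.ofReal_re, Complex.I_im, Complex.I_re,
    Complex.re_ofNat, Complex.im_ofNat, Real.sin_neg, Real.cos_neg,
    mul_zero, zero_mul, mul_one, one_mul, sub_zero, zero_sub, add_zero, zero_add, neg_neg,
    neg_zero]
  ring

/-- Asymptotics of P₀ and Q₀ near 0, and nonvanishing of P₀ away from 0. -/
theorem P0_Q0_asymptotics :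
    (∃ δ > (0:ℝ), ∃ C > (0:ℝ), ∀ ξ : ℝ, |ξ| < δ →
      ‖P0 ξ - (Real.pi : ℂ)^2 * (ξ : ℂ)^2 / 2‖ ≤ C * |ξ|^3 ∧
      ‖Q0 ξ - (Real.pi : ℂ)^2 * (ξ : ℂ)‖ ≤ C * |ξ|^2) ∧
    (∀ ξ : ℝ, ξ ≠ 0 → P0 ξ ≠ 0) := by
  have hs0 : (0:ℝ) < Real.sqrt 2 := by positivity
  have hsq : Real.sqrt 2 * Real.sqrt 2 = 2 := Real.mul_self_sqrt (by norm_num)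
  have hs1 : (1:ℝ) ≤ Real.sqrt 2 := by nlinarith
  have hs2 : Real.sqrt 2 ≤ 2 := by nlinarith
  have hpi : Real.pi ≤ 3.2 := by have := Real.pi_lt_d2; linarith
  constructor
  · refine ⟨1/4, by norm_num, 400, by norm_num, ?_⟩
    intro ξ hξ
    set t : ℝ := Real.pi * ξ / Real.sqrt 2 with ht
    have habs_t : |t| ≤ 4 * |ξ| := by
      rw [ht, abs_div, abs_mul, abs_of_pos Real.pi_pos, abs_of_pos hs0,
        div_le_iff₀ hs0]
      nlinarith [abs_nonneg ξ, Real.pi_pos]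
    have hw_norm : ‖((t:ℝ):ℂ) * Complex.I‖ = |t| := by
      simp
    have ht1 : |t| ≤ 1 := by linarith [habs_t, hξ, abs_nonneg ξ]
    have hw1 : ‖((t:ℝ):ℂ) * Complex.I‖ ≤ 1 := by rw [hw_norm]; exact ht1
    have hw1' : ‖-(((t:ℝ):ℂ) * Complex.I)‖ ≤ 1 := by rwa [norm_neg]
    have hR1 := exp3 _ hw1
    have hR2 := exp3 _ hw1'
    rw [hw_norm] at hR1
    rw [norm_neg, hw_norm] at hR2
    have hlam_norm : ‖lam‖ ≤ 3 := by
      unfold lam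
      rw [Complex.norm_real, Real.norm_eq_abs, abs_of_pos (by linarith)]
      linarith
    have hlaminv_norm : ‖lam⁻¹‖ ≤ 1 := by
      rw [lam_inv, Complex.norm_real, Real.norm_eq_abs, abs_of_nonneg (by linarith)]
      linarith
    have ht3 : |t|^3 ≤ (4*|ξ|)^3 := pow_le_pow_left₀ (abs_nonneg t) habs_t 3
    have ht2 : |t|^2 ≤ (4*|ξ|)^2 := pow_le_pow_left₀ (abs_nonneg t) habs_t 2
    constructor
    · rw [hP_id ξ, ← ht]
      calc ‖-lam * (Complex.exp ((t:ℂ) * Complex.I)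
              - (1 + (t:ℂ) * Complex.I + ((t:ℂ) * Complex.I)^2 / 2))
            + lam⁻¹ * (Complex.exp (-((t:ℂ) * Complex.I))
              - (1 + -((t:ℂ) * Complex.I) + (-((t:ℂ) * Complex.I))^2 / 2))‖
          ≤ ‖lam‖ * ‖Complex.exp ((t:ℂ) * Complex.I)
              - (1 + (t:ℂ) * Complex.I + ((t:ℂ) * Complex.I)^2 / 2)‖
            + ‖lam⁻¹‖ * ‖Complex.exp (-((t:ℂ) * Complex.I))
              - (1 + -((t:ℂ) * Complex.I) + (-((t:ℂ) * Complex.I))^2 / 2)‖ := by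
            refine (norm_add_le _ _).trans ?_
            rw [norm_mul, norm_mul, norm_neg]
        _ ≤ 3 * |t|^3 + 1 * |t|^3 :=
            add_le_add (mul_le_mul hlam_norm hR1 (norm_nonneg _) (by norm_num))
              (mul_le_mul hlaminv_norm hR2 (norm_nonneg _) (by norm_num))
        _ ≤ 400 * |ξ|^3 := by nlinarith [abs_nonneg ξ, pow_nonneg (abs_nonneg ξ) 3]
    · rw [hQ_id ξ, ← ht, norm_mul]
      have hc_norm : ‖(Real.pi:ℂ) * Complex.I * ((Real.sqrt 2:ℝ):ℂ) / 2‖ ≤ 4 := by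
        have : ‖(Real.pi:ℂ) * Complex.I * ((Real.sqrt 2:ℝ):ℂ) / 2‖
            = Real.pi * Real.sqrt 2 / 2 := by
          simp [map_div₀, map_mul, Complex.norm_real,
            abs_of_pos Real.pi_pos, abs_of_pos hs0]
        rw [this]
        nlinarith [Real.pi_pos]
      have hsnorm : ‖((Real.sqrt 2:ℝ):ℂ)‖ = Real.sqrt 2 := by
        simp [Complex.norm_real, abs_of_pos hs0]
      have hX : ‖ -((Real.sqrt 2:ℝ):ℂ) * (((t:ℝ):ℂ) * Complex.I)^2
          - lam * (Complex.exp ((t:ℂ) * Complex.I)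
              - (1 + (t:ℂ) * Complex.I + ((t:ℂ) * Complex.I)^2 / 2))
          - lam⁻¹ * (Complex.exp (-((t:ℂ) * Complex.I))
              - (1 + -((t:ℂ) * Complex.I) + (-((t:ℂ) * Complex.I))^2 / 2))‖
          ≤ 2 * |t|^2 + 3 * |t|^3 + 1 * |t|^3 := by
        refine (norm_sub_le _ _).trans ?_
        have h1 : ‖ -((Real.sqrt 2:ℝ):ℂ) * (((t:ℝ):ℂ) * Complex.I)^2
            - lam * (Complex.exp ((t:ℂ) * Complex.I)
              - (1 + (t:ℂ) * Complex.I + ((t:ℂ) * Complex.I)^2 / 2))‖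
            ≤ 2 * |t|^2 + 3 * |t|^3 := by
          refine (norm_sub_le _ _).trans ?_
          have ha : ‖ -((Real.sqrt 2:ℝ):ℂ) * (((t:ℝ):ℂ) * Complex.I)^2‖ ≤ 2 * |t|^2 := by
            rw [norm_mul, norm_neg, norm_pow, hsnorm, hw_norm]
            nlinarith [sq_nonneg (|t|)]
          have hb : ‖lam * (Complex.exp ((t:ℂ) * Complex.I)
              - (1 + (t:ℂ) * Complex.I + ((t:ℂ) * Complex.I)^2 / 2))‖ ≤ 3 * |t|^3 := by
            rw [norm_mul]
            exact mul_le_mul hlam_norm hR1 (norm_nonneg _) (by norm_num)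
          linarith
        have h2 : ‖lam⁻¹ * (Complex.exp (-((t:ℂ) * Complex.I))
            - (1 + -((t:ℂ) * Complex.I) + (-((t:ℂ) * Complex.I))^2 / 2))‖ ≤ 1 * |t|^3 := by
          rw [norm_mul]
          exact mul_le_mul hlaminv_norm hR2 (norm_nonneg _) (by norm_num)
        linarith
      calc ‖(Real.pi:ℂ) * Complex.I * ((Real.sqrt 2:ℝ):ℂ) / 2‖ * _
          ≤ 4 * (2 * |t|^2 + 3 * |t|^3 + 1 * |t|^3) :=
            mul_le_mul hc_norm hX (norm_nonneg _) (by norm_num)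
        _ ≤ 400 * |ξ|^2 := by
            have h33 : |t|^3 ≤ |t|^2 := by
              calc |t|^3 = |t|^2 * |t| := by ring
                _ ≤ |t|^2 * 1 := by gcongr
                _ = |t|^2 := by ring
            nlinarith [pow_nonneg (abs_nonneg ξ) 2]
  · intro ξ hξ h0
    have him : (P0 ξ).im = 0 := by rw [h0]; exact Complex.zero_im
    rw [P0_im] at him
    have hst : Real.sqrt 2 * (Real.pi * ξ / Real.sqrt 2) = Real.pi * ξ := by
      field_simp
    rcases lt_or_gt_of_ne hξ with h | h
    · have htneg : Real.pi * ξ / Real.sqrt 2 < 0 :=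
        div_neg_of_neg_of_pos (by nlinarith [Real.pi_pos]) hs0
      have hsin := Real.sin_lt (show 0 < -(Real.pi * ξ / Real.sqrt 2) by linarith)
      rw [Real.sin_neg] at hsin
      nlinarith [hsin, hst]
    · have htpos : 0 < Real.pi * ξ / Real.sqrt 2 :=
        div_pos (by nlinarith [Real.pi_pos]) hs0
      have hsin := Real.sin_lt htpos
      nlinarith [hsin, hst]
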